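/- For all integers a1, a2, a3 ≥ 1, the polynomial F(a1,a2,a3; q, t32, t13, t21) := Σ_{w ∈ W(a1,a2,a3)} q^{gep(w)} · t32^{#32(w)} · t13^{#13(w)} · t21^{#21(w)} in ℤ[q, t32, t13, t21] satisfies the functional recurrence F(a1,a2,a3; q, t32, t13, t21) = t21^{a2} · F(a1−1,a2,a3; q, q·t32, t13, t21) + t32^{a3} · F(a1,a2−1,a3; q, t32, q·t13, t21) + t13^{a1} · F(a1,a2,a3−1; q, t32, t13, q·t21). -/

import Mathlib

open MvPolynomial

/-- The Gepner statistic of a word `w` over a totally ordered alphabet: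
the number of triples of positions `i < j < k` such that `w_i w_j w_k`
reduces to one of the odd permutations `132`, `213`, `321`. -/
def gep {α : Type*} [LinearOrder α] (w : List α) : ℕ :=
  (Finset.univ.filter (fun t : Fin w.length × Fin w.length × Fin w.length =>
    t.1 < t.2.1 ∧ t.2.1 < t.2.2 ∧
      ((w.get t.1 < w.get t.2.2 ∧ w.get t.2.2 < w.get t.2.1) ∨
       (w.get t.2.1 < w.get t.1 ∧ w.get t.1 < w.get t.2.2) ∨
       (w.get t.2.2 < w.get t.2.1 ∧ w.get t.2.1 < w.get t.1)))).card

/-- `pairCount a b w` is the number of pairs of positions `i < j`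
with `w_i = a` and `w_j = b`. -/
def pairCount (a b : ℕ) (w : List ℕ) : ℕ :=
  (Finset.univ.filter (fun t : Fin w.length × Fin w.length =>
    t.1 < t.2 ∧ w.get t.1 = a ∧ w.get t.2 = b)).card

/-- `W a1 a2 a3` is the (finite) set of words over the alphabet `{1,2,3}`
with exactly `a1` occurrences of `1`, `a2` occurrences of `2` and
`a3` occurrences of `3`. -/
def W (a1 a2 a3 : ℕ) : Finset (List ℕ) :=
  ((List.replicate a1 1 ++ List.replicate a2 2 ++ List.replicate a3 3).permutations).toFinset

/-- The generating polynomial `F(a1,a2,a3; q, t32, t13, t21)` where the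
variables `q, t32, t13, t21` are `X 0, X 1, X 2, X 3` respectively:
`∑_{w ∈ W(a1,a2,a3)} q^{gep w} t32^{#32 w} t13^{#13 w} t21^{#21 w}`. -/
noncomputable def F (a1 a2 a3 : ℕ) : MvPolynomial (Fin 4) ℤ :=
  ∑ w ∈ W a1 a2 a3,
    X 0 ^ gep w * X 1 ^ pairCount 3 2 w * X 2 ^ pairCount 1 3 w * X 3 ^ pairCount 2 1 w

/-! ### Auxiliary counting lemmas -/

lemma count_eq_card (w : List ℕ) (a : ℕ) :
    (Finset.univ.filter fun i : Fin w.length => w.get i = a).card = w.count a := by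
  induction w with
  | nil => simp
  | cons x t ih =>
    rw [Finset.card_filter] at ih ⊢
    rw [List.count_cons, ← ih]
    show (∑ i : Fin (t.length + 1), if (x :: t).get i = a then 1 else 0) = _
    rw [Fin.sum_univ_succ]
    simp only [List.get_eq_getElem, List.getElem_cons_succ, Fin.val_succ, beq_iff_eq,
      Fin.val_zero, List.getElem_cons_zero]
    by_cases h : x = a <;> simp [h] <;> omega

lemma sum_pair_split (n : ℕ) (g : Fin (n+1) → Fin (n+1) → ℕ) :
    ∑ i, ∑ j, g i j =
      ((∑ i : Fin n, ∑ j : Fin n, g i.castSucc j.castSucc)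
        + ∑ i : Fin n, g i.castSucc (Fin.last n))
      + ((∑ j : Fin n, g (Fin.last n) j.castSucc) + g (Fin.last n) (Fin.last n)) := by
  rw [Fin.sum_univ_castSucc (f := fun i => ∑ j, g i j)]
  congr 1
  · rw [← Finset.sum_add_distrib]
    exact Finset.sum_congr rfl fun i _ => Fin.sum_univ_castSucc _
  · exact Fin.sum_univ_castSucc _

lemma sum_pair_split_lt (n : ℕ) (g : Fin (n+1) → Fin (n+1) → ℕ)
    (hg : ∀ i j, ¬ i < j → g i j = 0) :
    ∑ i, ∑ j, g i j =
      (∑ i : Fin n, ∑ j : Fin n, g i.castSucc j.castSucc)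
        + ∑ i : Fin n, g i.castSucc (Fin.last n) := by
  rw [sum_pair_split]
  have h1 : g (Fin.last n) (Fin.last n) = 0 := hg _ _ (lt_irrefl _)
  have h2 : ∀ j : Fin n, g (Fin.last n) j.castSucc = 0 := fun j =>
    hg _ _ (by simp [Fin.lt_def])
  simp [h1, h2]

lemma sum_triple_split_lt (n : ℕ) (g : Fin (n+1) → Fin (n+1) → Fin (n+1) → ℕ)
    (hg : ∀ i j k, ¬ (i < j ∧ j < k) → g i j k = 0) :
    ∑ i, ∑ j, ∑ k, g i j k =
      (∑ i : Fin n, ∑ j : Fin n, ∑ k : Fin n, g i.castSucc j.castSucc k.castSucc)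
        + ∑ i : Fin n, ∑ j : Fin n, g i.castSucc j.castSucc (Fin.last n) := by
  rw [sum_pair_split_lt n (fun i j => ∑ k, g i j k)
      (fun i j h => Finset.sum_eq_zero fun k _ => hg i j k (fun hc => h hc.1))]
  have h2 : ∀ i : Fin n, (∑ k, g i.castSucc (Fin.last n) k) = 0 :=
    fun i => Finset.sum_eq_zero fun k _ => hg _ _ _ (by
      rintro ⟨-, hk⟩
      simp only [Fin.lt_def, Fin.val_last] at hk
      omega)
  have h3 : ∀ (i j : Fin n), (∑ k, g i.castSucc j.castSucc k)
      = (∑ k : Fin n, g i.castSucc j.castSucc k.castSucc)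
        + g i.castSucc j.castSucc (Fin.last n) :=
    fun i j => Fin.sum_univ_castSucc _
  simp only [h2, Finset.sum_const_zero, add_zero, h3, Finset.sum_add_distrib]

/-! ### Behaviour of the statistics under appending a letter -/

lemma pairCount_concat (a b c : ℕ) (w : List ℕ) :
    pairCount a b (w ++ [c]) = pairCount a b w + if c = b then w.count a else 0 := by
  classical
  have hlen : (w ++ [c]).length = w.length + 1 := by simp
  rw [pairCount, Finset.card_filter]
  rw [← Fintype.sum_equiv ((finCongr hlen.symm).prodCongr (finCongr hlen.symm))
      (fun t : Fin (w.length+1) × Fin (w.length+1) =>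
        if ((finCongr hlen.symm) t.1 < (finCongr hlen.symm) t.2 ∧
            (w ++ [c]).get ((finCongr hlen.symm) t.1) = a ∧
            (w ++ [c]).get ((finCongr hlen.symm) t.2) = b) then 1 else 0)
      _ (fun t => rfl)]
  rw [Fintype.sum_prod_type]
  rw [sum_pair_split_lt _ _ (fun i j h => if_neg (by
      simp only [finCongr_apply, Fin.lt_def, Fin.coe_cast] at h ⊢
      omega))]
  simp only [List.get_eq_getElem, finCongr_apply, Fin.coe_cast, Fin.coe_castSucc, Fin.val_last,
    Fin.lt_def, List.getElem_append, Fin.is_lt, dif_pos, dif_neg, lt_self_iff_false,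
    Nat.sub_self, List.getElem_singleton, true_and]
  congr 1
  · rw [pairCount, Finset.card_filter, Fintype.sum_prod_type]
    simp only [Fin.lt_def, List.get_eq_getElem]
  · by_cases hcb : c = b
    · rw [if_pos hcb, ← count_eq_card, Finset.card_filter]
      simp [hcb]
    · simp [hcb]

lemma gep_concat (w : List ℕ) (c : ℕ) :
    gep (w ++ [c]) = gep w +
      (Finset.univ.filter fun t : Fin w.length × Fin w.length =>
        t.1 < t.2 ∧ ((w.get t.1 < c ∧ c < w.get t.2) ∨ (w.get t.2 < w.get t.1 ∧ w.get t.1 < c)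
          ∨ (c < w.get t.2 ∧ w.get t.2 < w.get t.1))).card := by
  classical
  have hlen : (w ++ [c]).length = w.length + 1 := by simp
  rw [gep, Finset.card_filter]
  rw [← Fintype.sum_equiv
      ((finCongr hlen.symm).prodCongr ((finCongr hlen.symm).prodCongr (finCongr hlen.symm)))
      (fun t : Fin (w.length+1) × Fin (w.length+1) × Fin (w.length+1) =>
        if ((finCongr hlen.symm) t.1 < (finCongr hlen.symm) t.2.1 ∧
            (finCongr hlen.symm) t.2.1 < (finCongr hlen.symm) t.2.2 ∧
            (((w ++ [c]).get ((finCongr hlen.symm) t.1) < (w ++ [c]).get ((finCongr hlen.symm) t.2.2) ∧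
              (w ++ [c]).get ((finCongr hlen.symm) t.2.2) < (w ++ [c]).get ((finCongr hlen.symm) t.2.1)) ∨
             ((w ++ [c]).get ((finCongr hlen.symm) t.2.1) < (w ++ [c]).get ((finCongr hlen.symm) t.1) ∧
              (w ++ [c]).get ((finCongr hlen.symm) t.1) < (w ++ [c]).get ((finCongr hlen.symm) t.2.2)) ∨
             ((w ++ [c]).get ((finCongr hlen.symm) t.2.2) < (w ++ [c]).get ((finCongr hlen.symm) t.2.1) ∧
              (w ++ [c]).get ((finCongr hlen.symm) t.2.1) < (w ++ [c]).get ((finCongr hlen.symm) t.1))))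
          then 1 else 0)
      _ (fun t => rfl)]
  simp only [Fintype.sum_prod_type]
  rw [sum_triple_split_lt _ _ (fun i j k h => if_neg (by
      simp only [finCongr_apply, Fin.lt_def, Fin.coe_cast] at h ⊢
      omega))]
  simp only [List.get_eq_getElem, finCongr_apply, Fin.coe_cast, Fin.coe_castSucc, Fin.val_last,
    Fin.lt_def, List.getElem_append, Fin.is_lt, dif_pos, dif_neg, lt_self_iff_false,
    Nat.sub_self, List.getElem_singleton, true_and, and_true]
  congr 1
  · rw [gep, Finset.card_filter]
    simp only [Fintype.sum_prod_type]
    simp only [Fin.lt_def, List.get_eq_getElem]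
  · rw [Finset.card_filter]
    simp only [Fintype.sum_prod_type]
    simp only [Fin.lt_def, List.get_eq_getElem, dite_false]

/-! ### The set of words -/

lemma mem_W {a1 a2 a3 : ℕ} {w : List ℕ} :
    w ∈ W a1 a2 a3 ↔
      (w.count 1 = a1 ∧ w.count 2 = a2 ∧ w.count 3 = a3 ∧ ∀ x ∈ w, x = 1 ∨ x = 2 ∨ x = 3) := by
  rw [W, List.mem_toFinset, List.mem_permutations, List.perm_iff_count]
  constructor
  · intro h
    have c1 := h 1; have c2 := h 2; have c3 := h 3
    simp [List.count_append, List.count_replicate] at c1 c2 c3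
    refine ⟨c1, c2, c3, fun x hx => ?_⟩
    by_contra hc
    push_neg at hc
    obtain ⟨n1, n2, n3⟩ := hc
    have hx0 : List.count x (List.replicate a1 1 ++ List.replicate a2 2 ++ List.replicate a3 3)
        = 0 := by
      simp only [List.count_append, List.count_replicate, beq_iff_eq]
      rw [if_neg (fun h => n1 h.symm), if_neg (fun h => n2 h.symm), if_neg (fun h => n3 h.symm)]
    have h0 : w.count x = 0 := (h x).trans hx0
    exact (List.count_eq_zero.mp h0) hx
  · rintro ⟨h1, h2, h3, hall⟩ x
    simp only [List.count_append, List.count_replicate, beq_iff_eq]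
    rcases eq_or_ne x 1 with rfl | n1
    · simp [h1]
    rcases eq_or_ne x 2 with rfl | n2
    · simp [h2]
    rcases eq_or_ne x 3 with rfl | n3
    · simp [h3]
    rw [List.count_eq_zero.2 (fun hmem => by
      rcases hall x hmem with h | h | h
      exacts [n1 h, n2 h, n3 h])]
    rw [if_neg (fun h => n1 h.symm), if_neg (fun h => n2 h.symm), if_neg (fun h => n3 h.symm)]

lemma W_decomp {a1 a2 a3 : ℕ} (h1 : 1 ≤ a1) (h2 : 1 ≤ a2) (h3 : 1 ≤ a3) :
    W a1 a2 a3 =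
      ((W (a1-1) a2 a3).image (· ++ [1]) ∪ (W a1 (a2-1) a3).image (· ++ [2])) ∪
        (W a1 a2 (a3-1)).image (· ++ [3]) := by
  ext w
  simp only [Finset.mem_union, Finset.mem_image, mem_W]
  constructor
  · rintro ⟨c1, c2, c3, hall⟩
    have hne : w ≠ [] := by
      intro h
      rw [h] at c1
      simp at c1
      omega
    obtain ⟨l, x, rfl⟩ : ∃ l x, w = l ++ [x] :=
      ⟨w.dropLast, w.getLast hne, (List.dropLast_append_getLast hne).symm⟩
    have hx := hall x (by simp)
    have hl : ∀ y ∈ l, y = 1 ∨ y = 2 ∨ y = 3 := fun y hy => hall y (by simp [hy])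
    rcases hx with rfl | rfl | rfl
    · simp [List.count_append, List.count_cons] at c1 c2 c3
      exact Or.inl (Or.inl ⟨l, ⟨by omega, c2, c3, hl⟩, rfl⟩)
    · simp [List.count_append, List.count_cons] at c1 c2 c3
      exact Or.inl (Or.inr ⟨l, ⟨c1, by omega, c3, hl⟩, rfl⟩)
    · simp [List.count_append, List.count_cons] at c1 c2 c3
      exact Or.inr ⟨l, ⟨c1, c2, by omega, hl⟩, rfl⟩
  · rintro ((⟨l, ⟨d1, d2, d3, dall⟩, rfl⟩ | ⟨l, ⟨d1, d2, d3, dall⟩, rfl⟩) |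
      ⟨l, ⟨d1, d2, d3, dall⟩, rfl⟩) <;>
    · refine ⟨?_, ?_, ?_, ?_⟩
      · simp [List.count_append, List.count_cons]; omega
      · simp [List.count_append, List.count_cons]; omega
      · simp [List.count_append, List.count_cons]; omega
      · intro y hy
        simp only [List.mem_append, List.mem_singleton] at hy
        rcases hy with hy | rfl
        · exact dall y hy
        · simp

theorem gep_genfun_functional_recurrence (a1 a2 a3 : ℕ)
    (h1 : 1 ≤ a1) (h2 : 1 ≤ a2) (h3 : 1 ≤ a3) :
    F a1 a2 a3 =
      X 3 ^ a2 * bind₁ (fun i : Fin 4 => if i = 1 then X 0 * X 1 else X i) (F (a1 - 1) a2 a3)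
        + X 1 ^ a3 * bind₁ (fun i : Fin 4 => if i = 2 then X 0 * X 2 else X i) (F a1 (a2 - 1) a3)
        + X 2 ^ a1 * bind₁ (fun i : Fin 4 => if i = 3 then X 0 * X 3 else X i) (F a1 a2 (a3 - 1)) := by
  classical
  have hdisj : ∀ (c d : ℕ), c ≠ d → ∀ (s t : Finset (List ℕ)),
      Disjoint (s.image (· ++ [c])) (t.image (· ++ [d])) := by
    intro c d hcd s t
    rw [Finset.disjoint_left]
    rintro w hw hw'
    obtain ⟨u, -, rfl⟩ := Finset.mem_image.1 hw
    obtain ⟨v, -, he⟩ := Finset.mem_image.1 hw'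
    have := congrArg List.reverse he
    simp at this
    exact hcd this.1.symm
  have hinj : ∀ (c : ℕ) (s : Finset (List ℕ)), ∀ x ∈ s, ∀ y ∈ s,
      x ++ [c] = y ++ [c] → x = y :=
    fun c s x _ y _ h => List.append_left_injective [c] h
  have branch1 : ∀ w ∈ W (a1-1) a2 a3,
      (X 0 ^ gep (w ++ [1]) * X 1 ^ pairCount 3 2 (w ++ [1]) * X 2 ^ pairCount 1 3 (w ++ [1])
          * X 3 ^ pairCount 2 1 (w ++ [1]) : MvPolynomial (Fin 4) ℤ)
        = X 3 ^ a2 * bind₁ (fun i : Fin 4 => if i = 1 then X 0 * X 1 else X i)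
            (X 0 ^ gep w * X 1 ^ pairCount 3 2 w * X 2 ^ pairCount 1 3 w
              * X 3 ^ pairCount 2 1 w) := by
    intro w hw
    obtain ⟨d1, d2, d3, dall⟩ := mem_W.mp hw
    have hget : ∀ i : Fin w.length, w.get i = 1 ∨ w.get i = 2 ∨ w.get i = 3 :=
      fun i => dall _ (w.get_mem i)
    have hg : gep (w ++ [1]) = gep w + pairCount 3 2 w := by
      rw [gep_concat, pairCount]
      congr 2
      apply Finset.filter_congr
      intro t _
      have e1 := hget t.1
      have e2 := hget t.2
      constructor
      · rintro ⟨hlt, hp⟩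
        exact ⟨hlt, by omega, by omega⟩
      · rintro ⟨hlt, hp1, hp2⟩
        exact ⟨hlt, by omega⟩
    have p32 : pairCount 3 2 (w ++ [1]) = pairCount 3 2 w := by rw [pairCount_concat]; simp
    have p13 : pairCount 1 3 (w ++ [1]) = pairCount 1 3 w := by rw [pairCount_concat]; simp
    have p21 : pairCount 2 1 (w ++ [1]) = pairCount 2 1 w + a2 := by
      rw [pairCount_concat]; simp [d2]
    rw [hg, p32, p13, p21]
    simp only [map_mul, map_pow, bind₁_X_right]
    simp only [show ((0 : Fin 4) = 1) = False by simp, show ((1 : Fin 4) = 1) = True by simp,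
      show ((2 : Fin 4) = 1) = False by simp, show ((3 : Fin 4) = 1) = False by simp,
      if_true, if_false]
    ring
  have branch2 : ∀ w ∈ W a1 (a2-1) a3,
      (X 0 ^ gep (w ++ [2]) * X 1 ^ pairCount 3 2 (w ++ [2]) * X 2 ^ pairCount 1 3 (w ++ [2])
          * X 3 ^ pairCount 2 1 (w ++ [2]) : MvPolynomial (Fin 4) ℤ)
        = X 1 ^ a3 * bind₁ (fun i : Fin 4 => if i = 2 then X 0 * X 2 else X i)
            (X 0 ^ gep w * X 1 ^ pairCount 3 2 w * X 2 ^ pairCount 1 3 w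
              * X 3 ^ pairCount 2 1 w) := by
    intro w hw
    obtain ⟨d1, d2, d3, dall⟩ := mem_W.mp hw
    have hget : ∀ i : Fin w.length, w.get i = 1 ∨ w.get i = 2 ∨ w.get i = 3 :=
      fun i => dall _ (w.get_mem i)
    have hg : gep (w ++ [2]) = gep w + pairCount 1 3 w := by
      rw [gep_concat, pairCount]
      congr 2
      apply Finset.filter_congr
      intro t _
      have e1 := hget t.1
      have e2 := hget t.2
      constructor
      · rintro ⟨hlt, hp⟩
        exact ⟨hlt, by omega, by omega⟩
      · rintro ⟨hlt, hp1, hp2⟩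
        exact ⟨hlt, by omega⟩
    have p32 : pairCount 3 2 (w ++ [2]) = pairCount 3 2 w + a3 := by
      rw [pairCount_concat]; simp [d3]
    have p13 : pairCount 1 3 (w ++ [2]) = pairCount 1 3 w := by rw [pairCount_concat]; simp
    have p21 : pairCount 2 1 (w ++ [2]) = pairCount 2 1 w := by rw [pairCount_concat]; simp
    rw [hg, p32, p13, p21]
    simp only [map_mul, map_pow, bind₁_X_right]
    simp only [show ((0 : Fin 4) = 2) = False by simp, show ((1 : Fin 4) = 2) = False by simp,
      show ((2 : Fin 4) = 2) = True by simp, show ((3 : Fin 4) = 2) = False by simp,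
      if_true, if_false]
    ring
  have branch3 : ∀ w ∈ W a1 a2 (a3-1),
      (X 0 ^ gep (w ++ [3]) * X 1 ^ pairCount 3 2 (w ++ [3]) * X 2 ^ pairCount 1 3 (w ++ [3])
          * X 3 ^ pairCount 2 1 (w ++ [3]) : MvPolynomial (Fin 4) ℤ)
        = X 2 ^ a1 * bind₁ (fun i : Fin 4 => if i = 3 then X 0 * X 3 else X i)
            (X 0 ^ gep w * X 1 ^ pairCount 3 2 w * X 2 ^ pairCount 1 3 w
              * X 3 ^ pairCount 2 1 w) := by
    intro w hw
    obtain ⟨d1, d2, d3, dall⟩ := mem_W.mp hw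
    have hget : ∀ i : Fin w.length, w.get i = 1 ∨ w.get i = 2 ∨ w.get i = 3 :=
      fun i => dall _ (w.get_mem i)
    have hg : gep (w ++ [3]) = gep w + pairCount 2 1 w := by
      rw [gep_concat, pairCount]
      congr 2
      apply Finset.filter_congr
      intro t _
      have e1 := hget t.1
      have e2 := hget t.2
      constructor
      · rintro ⟨hlt, hp⟩
        exact ⟨hlt, by omega, by omega⟩
      · rintro ⟨hlt, hp1, hp2⟩
        exact ⟨hlt, by omega⟩
    have p32 : pairCount 3 2 (w ++ [3]) = pairCount 3 2 w := by rw [pairCount_concat]; simp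
    have p13 : pairCount 1 3 (w ++ [3]) = pairCount 1 3 w + a1 := by
      rw [pairCount_concat]; simp [d1]
    have p21 : pairCount 2 1 (w ++ [3]) = pairCount 2 1 w := by rw [pairCount_concat]; simp
    rw [hg, p32, p13, p21]
    simp only [map_mul, map_pow, bind₁_X_right]
    simp only [show ((0 : Fin 4) = 3) = False by simp, show ((1 : Fin 4) = 3) = False by simp,
      show ((2 : Fin 4) = 3) = False by simp, show ((3 : Fin 4) = 3) = True by simp,
      if_true, if_false]
    ring
  unfold F
  rw [W_decomp h1 h2 h3,
    Finset.sum_union (Finset.disjoint_union_left.2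
      ⟨hdisj 1 3 (by norm_num) _ _, hdisj 2 3 (by norm_num) _ _⟩),
    Finset.sum_union (hdisj 1 2 (by norm_num) _ _),
    Finset.sum_image (hinj 1 _), Finset.sum_image (hinj 2 _), Finset.sum_image (hinj 3 _),
    map_sum, map_sum, map_sum, Finset.mul_sum, Finset.mul_sum, Finset.mul_sum]
  exact congrArg₂ (· + ·)
    (congrArg₂ (· + ·) (Finset.sum_congr rfl branch1) (Finset.sum_congr rfl branch2))
    (Finset.sum_congr rfl branch3)
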